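/- Define f : (0,∞)² → ℝ by f(u,v) = 1 if u = v = 1 and f(u,v) = (u·v − 1)/(u + v − 2) otherwise. Then for all u, v ∈ (0,1] one has 0 < f(u,v) ≤ 1 and 1/f(u,v) ≤ f(1/u, 1/v) ≤ min(1/u, 1/v). -/

import Mathlib

/-- The conflict function `f`. -/
noncomputable def conflictF (u v : ℝ) : ℝ :=
  if u = 1 ∧ v = 1 then 1 else (u * v - 1) / (u + v - 2)

/-- for `u, v ∈ (0,1]`, `0 < f(u,v) ≤ 1` and
`1/f(u,v) ≤ f(1/u,1/v) ≤ min(1/u, 1/v)`. -/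
theorem stmt12 (u v : ℝ) (hu0 : 0 < u) (hu1 : u ≤ 1) (hv0 : 0 < v) (hv1 : v ≤ 1) :
    0 < conflictF u v ∧ conflictF u v ≤ 1 ∧
    1 / conflictF u v ≤ conflictF (1 / u) (1 / v) ∧
    conflictF (1 / u) (1 / v) ≤ min (1 / u) (1 / v) := by
  by_cases h : u = 1 ∧ v = 1
  · obtain ⟨hu, hv⟩ := h
    subst hu; subst hv
    norm_num [conflictF]
  · have hcase : u < 1 ∨ v < 1 := by
      rcases lt_or_eq_of_le hu1 with h1 | h1
      · exact Or.inl h1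
      rcases lt_or_eq_of_le hv1 with h2 | h2
      · exact Or.inr h2
      exact absurd ⟨h1, h2⟩ h
    have hs : 2 - u - v > 0 := by rcases hcase with h1 | h1 <;> nlinarith
    have hp : 1 - u * v > 0 := by rcases hcase with h1 | h1 <;> nlinarith
    have hD : u + v - 2 * (u * v) > 0 := by
      rcases hcase with h1 | h1
      · nlinarith [mul_pos hv0 (sub_pos.mpr h1), mul_nonneg hu0.le (sub_nonneg.mpr hv1)]
      · nlinarith [mul_pos hu0 (sub_pos.mpr h1), mul_nonneg hv0.le (sub_nonneg.mpr hu1)]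
    have h' : ¬ (1 / u = 1 ∧ 1 / v = 1) := by
      rintro ⟨h1, h2⟩
      rw [div_eq_one_iff_eq (ne_of_gt hu0)] at h1
      rw [div_eq_one_iff_eq (ne_of_gt hv0)] at h2
      exact h ⟨h1.symm, h2.symm⟩
    have e1 : conflictF u v = (1 - u * v) / (2 - u - v) := by
      rw [conflictF, if_neg h, show u * v - 1 = -(1 - u * v) by ring,
        show u + v - 2 = -(2 - u - v) by ring, neg_div_neg_eq]
    have hd2 : 1 / u + 1 / v - 2 ≠ 0 := by
      have : 1 / u + 1 / v - 2 = (u + v - 2 * (u * v)) / (u * v) := by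
        field_simp; ring
      rw [this]
      positivity
    have e2 : conflictF (1 / u) (1 / v) = (1 - u * v) / (u + v - 2 * (u * v)) := by
      rw [conflictF, if_neg h', div_eq_div_iff hd2 (ne_of_gt hD)]
      field_simp
      ring_nf
    rw [e1, e2]
    refine ⟨div_pos hp hs, ?_, ?_, ?_⟩
    · rw [div_le_one hs]; nlinarith
    · rw [one_div_div, div_le_div_iff₀ hp hD]
      nlinarith [sq_nonneg (1 + u * v - u - v)]
    · refine le_min ?_ ?_
      · rw [div_le_div_iff₀ hD hu0]
        nlinarith [mul_nonneg hv0.le (sq_nonneg (1 - u))]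
      · rw [div_le_div_iff₀ hD hv0]
        nlinarith [mul_nonneg hu0.le (sq_nonneg (1 - v))]
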